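/- Let A be a symmetric positive definite d×d real matrix and {γ_i}_{i≥1} a positive non-increasing sequence, regularly varying with index −ρ for some ρ∈[0,1), such that {1/γ_i} is concave and γ_1σ<1 for every eigenvalue σ of A. Define G_{N,i} = γ_i Σ_{j=i}^N ∏_{k=i+1}^j (I−γ_k A). Then for every ε>0 there exists i_0 such that for all i≥i_0 and all N≥i, G_{N,i} ⪯ (1+ε)A^{−1} in the Loewner order. -/

import Mathlib

open Filter Finset
open scoped Topology RealInnerProductSpace

noncomputable section

/-- The ordered product `f a * f (a+1) * ⋯ * f b` (equal to `1` when `b < a`). -/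
def prodIcc {M : Type*} [Monoid M] (f : ℕ → M) (a b : ℕ) : M :=
  ((List.range' a (b + 1 - a)).map f).prod

lemma prodIcc_eq_prod {M : Type*} [CommMonoid M] (f : ℕ → M) (a b : ℕ) :
    prodIcc f a b = ∏ k ∈ Finset.Icc a b, f k := by
  rw [prodIcc, Nat.Icc_eq_range']
  rfl

lemma listprod_apply_eigen {d : ℕ} (l : List ℕ)
    (f : ℕ → EuclideanSpace ℝ (Fin d) →L[ℝ] EuclideanSpace ℝ (Fin d)) (c : ℕ → ℝ)
    (v : EuclideanSpace ℝ (Fin d)) (h : ∀ k, f k v = c k • v) :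
    ((l.map f).prod) v = ((l.map c).prod) • v := by
  induction l with
  | nil => simp
  | cons a l ih =>
    simp only [List.map_cons, List.prod_cons, ContinuousLinearMap.mul_apply, ih, map_smul, h,
      smul_smul]
    rw [mul_comm]

lemma prodIcc_apply_eigen {d : ℕ} (γ : ℕ → ℝ)
    (A : EuclideanSpace ℝ (Fin d) →L[ℝ] EuclideanSpace ℝ (Fin d))
    (v : EuclideanSpace ℝ (Fin d)) (σ : ℝ) (hv : A v = σ • v) (a b : ℕ) :
    (prodIcc (fun k => (1 : EuclideanSpace ℝ (Fin d) →L[ℝ] EuclideanSpace ℝ (Fin d))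
        - γ k • A) a b) v = (∏ k ∈ Finset.Icc a b, (1 - γ k * σ)) • v := by
  rw [← prodIcc_eq_prod, prodIcc, prodIcc]
  apply listprod_apply_eigen
  intro k
  simp [hv, smul_smul, sub_smul]


lemma scalar_bound (γ : ℕ → ℝ) (hγpos : ∀ i, 1 ≤ i → 0 < γ i)
    (hγmono : ∀ i j, 1 ≤ i → i ≤ j → γ j ≤ γ i)
    (hγconcave : ∀ i, 1 ≤ i → (γ (i + 2))⁻¹ - (γ (i + 1))⁻¹ ≤ (γ (i + 1))⁻¹ - (γ i)⁻¹)
    (σ : ℝ) (hσ : 0 < σ) (hσ1 : γ 1 * σ < 1)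
    (ε : ℝ) (hε : 0 < ε)
    (i : ℕ) (hi : 1 ≤ i)
    (hδσ : (γ (i+1))⁻¹ - (γ i)⁻¹ < σ)
    (hcond : σ * (1 + γ i * ((γ (i+1))⁻¹ - (γ i)⁻¹))
      ≤ (1+ε) * (σ - ((γ (i+1))⁻¹ - (γ i)⁻¹)))
    (N : ℕ) (hN : i ≤ N) :
    γ i * ∑ j ∈ Finset.Icc i N, ∏ k ∈ Finset.Icc (i+1) j, (1 - γ k * σ) ≤ (1+ε)/σ := by
  set δ : ℕ → ℝ := fun j => (γ (j+1))⁻¹ - (γ j)⁻¹ with hδdef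
  set P : ℕ → ℝ := fun j => ∏ k ∈ Finset.Icc (i+1) j, (1 - γ k * σ) with hPdef
  have hγipos := hγpos i hi
  have hfac : ∀ k, 1 ≤ k → 0 < 1 - γ k * σ := by
    intro k hk
    have h1 : γ k * σ ≤ γ 1 * σ :=
      mul_le_mul_of_nonneg_right (hγmono 1 k le_rfl hk) hσ.le
    linarith
  have hPpos : ∀ j, 0 < P j := by
    intro j
    apply Finset.prod_pos
    intro k hk
    exact hfac k (le_trans (Nat.le_add_left 1 i) (Finset.mem_Icc.mp hk).1)
  have hPrec : ∀ j, i ≤ j → P (j+1) = P j * (1 - γ (j+1) * σ) := by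
    intro j hj
    exact Finset.prod_Icc_succ_top (Nat.succ_le_succ hj) _
  have hδnonneg : ∀ j, 1 ≤ j → 0 ≤ δ j := by
    intro j hj
    have h1 : (γ j)⁻¹ ≤ (γ (j+1))⁻¹ :=
      inv_anti₀ (hγpos (j+1) (le_trans hj (Nat.le_succ j)))
        (hγmono j (j+1) hj (Nat.le_succ j))
    simpa [hδdef] using sub_nonneg.mpr h1
  have hδmono : ∀ j, i ≤ j → δ j ≤ δ i := by
    intro j hj
    induction j, hj using Nat.le_induction with
    | base => exact le_rfl
    | succ n hn ih =>
      exact le_trans (hγconcave n (le_trans hi hn)) ih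
  have hδi := hδnonneg i hi
  have hδσ' : δ i < σ := hδσ
  have hcond' : σ * (1 + γ i * δ i) ≤ (1+ε) * (σ - δ i) := hcond
  have hPi : P i = 1 := by
    simp [hPdef, Finset.Icc_eq_empty (Nat.not_succ_le_self i)]
  have hwi : γ i * (γ (i+1))⁻¹ = 1 + γ i * δ i := by
    have hne : γ (i+1) ≠ 0 := (hγpos (i+1) (le_trans hi (Nat.le_succ i))).ne'
    have hne2 : γ i ≠ 0 := hγipos.ne'
    simp only [hδdef]
    field_simp
    ring
  clear_value δ P
  -- Abel-type induction
  have hD : ∀ N, i ≤ N →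
      ∑ j ∈ Finset.Icc i N, (γ i * (γ (j+1))⁻¹) * (P j - P (j+1))
        + (γ i * (γ (N+1))⁻¹) * P (N+1)
      ≤ γ i * (γ (i+1))⁻¹ + (γ i * δ i) * ∑ j ∈ Finset.Icc (i+1) N, P j := by
    intro N hN
    induction N, hN using Nat.le_induction with
    | base =>
      have hIcc : Finset.Icc (i+1) i = ∅ := Finset.Icc_eq_empty (Nat.not_succ_le_self i)
      rw [Finset.Icc_self, Finset.sum_singleton, hIcc, Finset.sum_empty]
      rw [hPi]
      ring_nf
      nlinarith [hPpos (i+1)]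
    | succ n hn ih =>
      rw [Finset.sum_Icc_succ_top (le_trans hn (Nat.le_succ n)),
        Finset.sum_Icc_succ_top (Nat.succ_le_succ hn)]
      have hkey : (γ i * (γ (n+1+1))⁻¹) * (P (n+1) - P (n+1+1))
          + (γ i * (γ (n+1+1))⁻¹) * P (n+1+1) - (γ i * (γ (n+1))⁻¹) * P (n+1)
          = (γ i * δ (n+1)) * P (n+1) := by
        simp only [hδdef]; ring
      have hmono2 : γ i * δ (n+1) * P (n+1) ≤ γ i * δ i * P (n+1) :=
        mul_le_mul_of_nonneg_right
          (mul_le_mul_of_nonneg_left (hδmono (n+1) (le_trans hn (Nat.le_succ n))) hγipos.le)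
          (hPpos (n+1)).le
      simp only [Nat.succ_eq_add_one]
      linarith
  -- termwise identity
  have hkey2 : σ * (γ i * ∑ j ∈ Finset.Icc i N, P j)
      = ∑ j ∈ Finset.Icc i N, (γ i * (γ (j+1))⁻¹) * (P j - P (j+1)) := by
    rw [Finset.mul_sum, Finset.mul_sum]
    apply Finset.sum_congr rfl
    intro j hj
    have hij : i ≤ j := (Finset.mem_Icc.mp hj).1
    have hne : γ (j+1) ≠ 0 := (hγpos (j+1) (le_trans hi (le_trans hij (Nat.le_succ j)))).ne'
    rw [hPrec j hij]
    field_simp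
    ring
  set T := ∑ j ∈ Finset.Icc i N, P j with hT
  clear_value T
  have hTsub : ∑ j ∈ Finset.Icc (i+1) N, P j ≤ T := by
    rw [hT]
    apply Finset.sum_le_sum_of_subset_of_nonneg
    · exact Finset.Icc_subset_Icc_left (Nat.le_succ i)
    · intro j _ _; exact (hPpos j).le
  have hγδ : 0 ≤ γ i * δ i := mul_nonneg hγipos.le hδi
  have hwn : 0 ≤ (γ i * (γ (N+1))⁻¹) * P (N+1) := by
    have h := hγpos (N+1) (le_trans hi (le_trans hN (Nat.le_succ N)))
    exact mul_nonneg (mul_nonneg hγipos.le (inv_nonneg.mpr h.le)) (hPpos _).le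
  have h1 : σ * (γ i * T) ≤ γ i * (γ (i+1))⁻¹ + (γ i * δ i) * T := by
    have hD' := hD N hN
    have h2 : (γ i * δ i) * ∑ j ∈ Finset.Icc (i+1) N, P j ≤ (γ i * δ i) * T :=
      mul_le_mul_of_nonneg_left hTsub hγδ
    rw [hkey2]
    linarith
  set X := γ i * T with hX
  have hr : (γ i * δ i) * T = δ i * X := by rw [hX]; ring
  have hXd : (σ - δ i) * X ≤ 1 + γ i * δ i := by
    have hexp : (σ - δ i) * X = σ * X - δ i * X := by ring
    rw [hwi] at h1
    rw [hexp]
    linarith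
  have hsub : 0 < σ - δ i := by linarith
  have h2 : σ * X ≤ 1 + ε := by
    nlinarith [mul_le_mul_of_nonneg_left hXd hσ.le, hcond', hsub]
  rw [le_div_iff₀ hσ]
  linarith


lemma gamma_mul_atTop (γ : ℕ → ℝ) (hγpos : ∀ i, 1 ≤ i → 0 < γ i)
    (hγmono : ∀ i j, 1 ≤ i → i ≤ j → γ j ≤ γ i)
    (L : ℝ) (hL : 1/2 < L)
    (h2 : Tendsto (fun i : ℕ => γ (2*i) / γ i) atTop (𝓝 L)) :
    Tendsto (fun i : ℕ => (i : ℝ) * γ i) atTop atTop := by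
  set θ : ℝ := (1/2 + L)/2 with hθdef
  have hθhalf : 1/2 < θ := by rw [hθdef]; linarith
  have hθL : θ < L := by rw [hθdef]; linarith
  have hθpos : 0 < θ := by linarith
  obtain ⟨i₁', h₁'⟩ := eventually_atTop.mp (h2.eventually_const_lt hθL)
  set i₁ := max i₁' 1 with hi₁def
  have hi₁1 : 1 ≤ i₁ := le_max_right _ _
  have hstep : ∀ i, i₁ ≤ i → θ * γ i ≤ γ (2*i) := by
    intro i hi
    have hgi : 0 < γ i := hγpos i (le_trans hi₁1 hi)
    have := h₁' i (le_trans (le_max_left _ _) hi)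
    rw [lt_div_iff₀ hgi] at this
    exact this.le
  have hpow : ∀ m : ℕ, θ^m * γ i₁ ≤ γ (2^m * i₁) := by
    intro m
    induction m with
    | zero => simp
    | succ m ih =>
      have hle : i₁ ≤ 2^m * i₁ := Nat.le_mul_of_pos_left i₁ (Nat.pow_pos (by norm_num))
      have := hstep (2^m * i₁) hle
      have h3 : θ * (θ^m * γ i₁) ≤ θ * γ (2^m * i₁) :=
        mul_le_mul_of_nonneg_left ih hθpos.le
      calc θ^(m+1) * γ i₁ = θ * (θ^m * γ i₁) := by ring
        _ ≤ θ * γ (2^m * i₁) := h3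
        _ ≤ γ (2*(2^m * i₁)) := hstep _ hle
        _ = γ (2^(m+1) * i₁) := by ring_nf
  have hi₁pos : 0 < i₁ := hi₁1
  have hγi₁pos : 0 < γ i₁ := hγpos i₁ hi₁1
  set c : ℝ := θ * ((i₁ : ℝ) * γ i₁) with hcdef
  have hcpos : 0 < c := by
    apply mul_pos hθpos
    exact mul_pos (by exact_mod_cast hi₁pos) hγi₁pos
  have hmain : ∀ i, i₁ ≤ i → (2*θ)^(Nat.log 2 (i / i₁)) * c ≤ (i : ℝ) * γ i := by
    intro i hi
    set n := Nat.log 2 (i / i₁) with hndef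
    have hq1 : 1 ≤ i / i₁ := (Nat.one_le_div_iff hi₁pos).mpr hi
    have hq0 : i / i₁ ≠ 0 := by omega
    have hlow : 2^n * i₁ ≤ i := by
      calc 2^n * i₁ ≤ (i / i₁) * i₁ :=
            Nat.mul_le_mul_right i₁ (Nat.pow_log_le_self 2 hq0)
        _ ≤ i := Nat.div_mul_le_self i i₁
    have hup : i ≤ 2^(n+1) * i₁ := by
      have h6 := Nat.lt_pow_succ_log_self (b := 2) (by norm_num) (i / i₁)
      have h7 := (Nat.div_lt_iff_lt_mul hi₁pos).mp h6
      simpa only [← hndef, Nat.succ_eq_add_one] using h7.le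
    have hi1 : 1 ≤ i := le_trans hi₁1 hi
    have hγlow : θ^(n+1) * γ i₁ ≤ γ i :=
      le_trans (hpow (n+1)) (hγmono i (2^(n+1) * i₁) hi1 hup)
    have hicast : ((2^n * i₁ : ℕ) : ℝ) ≤ (i : ℝ) := by exact_mod_cast hlow
    have hθγ : 0 ≤ θ^(n+1) * γ i₁ := mul_nonneg (pow_nonneg hθpos.le _) hγi₁pos.le
    have h5 : ((2^n * i₁ : ℕ) : ℝ) * (θ^(n+1) * γ i₁) ≤ (i : ℝ) * γ i :=
      mul_le_mul hicast hγlow hθγ (by positivity)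
    calc (2*θ)^n * c = ((2^n * i₁ : ℕ) : ℝ) * (θ^(n+1) * γ i₁) := by
          push_cast
          rw [mul_pow]
          ring
      _ ≤ (i : ℝ) * γ i := h5
  rw [tendsto_atTop]
  intro M
  have h2θ : (1:ℝ) < 2*θ := by linarith
  obtain ⟨n₀, hn₀⟩ := ((tendsto_pow_atTop_atTop_of_one_lt h2θ).eventually_ge_atTop (M / c)).exists
  rw [eventually_atTop]
  refine ⟨2^n₀ * i₁, fun i hi => ?_⟩
  have hii₁ : i₁ ≤ i := le_trans (Nat.le_mul_of_pos_left i₁ (Nat.pow_pos (by norm_num))) hi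
  have hq0 : i / i₁ ≠ 0 := by
    have := (Nat.one_le_div_iff hi₁pos).mpr hii₁; omega
  have hn₀n : n₀ ≤ Nat.log 2 (i / i₁) := by
    rw [Nat.le_log_iff_pow_le (by norm_num) hq0]
    exact (Nat.le_div_iff_mul_le hi₁pos).mpr hi
  have hpowmono : (2*θ)^n₀ ≤ (2*θ)^(Nat.log 2 (i / i₁)) :=
    pow_le_pow_right₀ (by linarith) hn₀n
  have hMc : M ≤ (2*θ)^n₀ * c := by
    rw [div_le_iff₀ hcpos] at hn₀
    linarith
  calc M ≤ (2*θ)^n₀ * c := hMc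
    _ ≤ (2*θ)^(Nat.log 2 (i / i₁)) * c := mul_le_mul_of_nonneg_right hpowmono hcpos.le
    _ ≤ (i : ℝ) * γ i := hmain i hii₁


lemma delta_tendsto (γ : ℕ → ℝ) (hγpos : ∀ i, 1 ≤ i → 0 < γ i)
    (hγmono : ∀ i j, 1 ≤ i → i ≤ j → γ j ≤ γ i)
    (hγconcave : ∀ i, 1 ≤ i → (γ (i + 2))⁻¹ - (γ (i + 1))⁻¹ ≤ (γ (i + 1))⁻¹ - (γ i)⁻¹)
    (hI : Tendsto (fun i : ℕ => (i : ℝ) * γ i) atTop atTop) :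
    Tendsto (fun i : ℕ => (γ (i+1))⁻¹ - (γ i)⁻¹) atTop (𝓝 0) := by
  have hδmono : ∀ a b : ℕ, 1 ≤ a → a ≤ b →
      (γ (b+1))⁻¹ - (γ b)⁻¹ ≤ (γ (a+1))⁻¹ - (γ a)⁻¹ := by
    intro a b ha hab
    induction b, hab using Nat.le_induction with
    | base => exact le_rfl
    | succ n hn ih => exact le_trans (hγconcave n (le_trans ha hn)) ih
  have hδnn : ∀ j : ℕ, 1 ≤ j → 0 ≤ (γ (j+1))⁻¹ - (γ j)⁻¹ := by
    intro j hj
    have h1 : (γ j)⁻¹ ≤ (γ (j+1))⁻¹ :=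
      inv_anti₀ (hγpos (j+1) (le_trans hj (Nat.le_succ j)))
        (hγmono j (j+1) hj (Nat.le_succ j))
    linarith
  have hI' : Tendsto (fun i : ℕ => (i : ℝ) * γ (i+1)) atTop atTop := by
    have h1 : Tendsto (fun i : ℕ => ((i+1 : ℕ) : ℝ) * γ (i+1)) atTop atTop :=
      hI.comp (tendsto_add_atTop_nat 1)
    have h2 : Tendsto (fun i : ℕ => ((i+1 : ℕ) : ℝ) * γ (i+1) + (-γ 1)) atTop atTop :=
      tendsto_atTop_add_const_right _ _ h1
    apply tendsto_atTop_mono _ h2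
    intro i
    have : γ (i+1) ≤ γ 1 := hγmono 1 (i+1) le_rfl (Nat.le_add_left 1 i)
    push_cast
    nlinarith
  have hbound : ∀ i : ℕ, 1 ≤ i →
      (γ (i+1))⁻¹ - (γ i)⁻¹ ≤ ((i : ℝ) * γ (i+1))⁻¹ := by
    intro i hi
    have htel : ∑ m ∈ Finset.range i, ((γ (m+1+1))⁻¹ - (γ (m+1))⁻¹)
        = (γ (i+1))⁻¹ - (γ (0+1))⁻¹ :=
      Finset.sum_range_sub (fun m => (γ (m+1))⁻¹) i
    have hterm : ∀ m ∈ Finset.range i,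
        (γ (i+1))⁻¹ - (γ i)⁻¹ ≤ (γ (m+1+1))⁻¹ - (γ (m+1))⁻¹ := by
      intro m hm
      exact hδmono (m+1) i (Nat.le_add_left 1 m) (Finset.mem_range.mp hm)
    have hcard := Finset.card_nsmul_le_sum (Finset.range i) _ _ hterm
    rw [Finset.card_range, htel] at hcard
    have hγ1 : 0 < γ 1 := hγpos 1 le_rfl
    have hγi1 : 0 < γ (i+1) := hγpos (i+1) (le_trans hi (Nat.le_succ i))
    have hipos : (0:ℝ) < i := by exact_mod_cast hi
    have hsm : (i : ℝ) * ((γ (i+1))⁻¹ - (γ i)⁻¹) ≤ (γ (i+1))⁻¹ := by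
      have : (0:ℝ) ≤ (γ 1)⁻¹ := by positivity
      have hns : (i : ℝ) * ((γ (i+1))⁻¹ - (γ i)⁻¹)
          = i • ((γ (i+1))⁻¹ - (γ i)⁻¹) := (nsmul_eq_mul _ _).symm
      rw [hns]
      norm_num at hcard
      linarith [hcard]
    rw [mul_inv, inv_mul_eq_div, le_div_iff₀ hipos]
    linarith [hsm]
  have hinv : Tendsto (fun i : ℕ => ((i : ℝ) * γ (i+1))⁻¹) atTop (𝓝 0) :=
    hI'.inv_tendsto_atTop
  apply tendsto_of_tendsto_of_tendsto_of_le_of_le' tendsto_const_nhds hinv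
  · filter_upwards [eventually_ge_atTop 1] with i hi using hδnn i hi
  · filter_upwards [eventually_ge_atTop 1] with i hi using hbound i hi


lemma inner_eig_sum {d : ℕ} (b : OrthonormalBasis (Fin d) ℝ (EuclideanSpace ℝ (Fin d)))
    (B : EuclideanSpace ℝ (Fin d) →L[ℝ] EuclideanSpace ℝ (Fin d)) (β : Fin d → ℝ)
    (hB : ∀ n, B (b n) = β n • b n) (x : EuclideanSpace ℝ (Fin d)) :
    ⟪B x, x⟫ = ∑ n, β n * (b.repr x n)^2 := by
  have hBx : B x = ∑ n, (β n * b.repr x n) • b n := by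
    conv_lhs => rw [← b.sum_repr x]
    rw [map_sum]
    refine Finset.sum_congr rfl fun n _ => ?_
    rw [map_smul, hB n, smul_smul, mul_comm]
  rw [hBx, sum_inner]
  refine Finset.sum_congr rfl fun n _ => ?_
  rw [real_inner_smul_left, ← b.repr_apply_apply]
  ring


/-- **Lemma A.7, upper bound**: for a symmetric positive definite `A` and a positive
non-increasing regularly varying learning-rate sequence `{γ_i}` with `{1/γ_i}` concave and
`γ₁σ < 1` for every eigenvalue `σ` of `A`, for every `ε > 0` there is `i₀` such that for
all `i ≥ i₀` and all `N ≥ i`, `G_{N,i} ⪯ (1+ε)A⁻¹` in the Loewner order, where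
`G_{N,i} = γ_i Σ_{j=i}^N ∏_{k=i+1}^j (I − γ_k A)`. -/
theorem GNi_Loewner_upper_bound
    {d : ℕ} (A : EuclideanSpace ℝ (Fin d) →L[ℝ] EuclideanSpace ℝ (Fin d))
    (hAsym : IsSelfAdjoint A)
    (hApos : ∀ x : EuclideanSpace ℝ (Fin d), x ≠ 0 → 0 < ⟪A x, x⟫)
    (Ainv : EuclideanSpace ℝ (Fin d) →L[ℝ] EuclideanSpace ℝ (Fin d))
    (hAinv₁ : A.comp Ainv = ContinuousLinearMap.id ℝ (EuclideanSpace ℝ (Fin d)))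
    (hAinv₂ : Ainv.comp A = ContinuousLinearMap.id ℝ (EuclideanSpace ℝ (Fin d)))
    (γ : ℕ → ℝ) (hγpos : ∀ i, 1 ≤ i → 0 < γ i)
    (hγmono : ∀ i j, 1 ≤ i → i ≤ j → γ j ≤ γ i)
    (ρ : ℝ) (hρ0 : 0 ≤ ρ) (hρ1 : ρ < 1)
    (hγRV : ∀ lam : ℝ, 0 < lam →
      Tendsto (fun i : ℕ => γ ⌊lam * (i : ℝ)⌋₊ / γ i) atTop (𝓝 (lam ^ (-ρ))))
    (hγconcave : ∀ i, 1 ≤ i → (γ (i + 2))⁻¹ - (γ (i + 1))⁻¹ ≤ (γ (i + 1))⁻¹ - (γ i)⁻¹)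
    (heig : ∀ σ : ℝ, ∀ x : EuclideanSpace ℝ (Fin d), x ≠ 0 → A x = σ • x → γ 1 * σ < 1) :
    ∀ ε : ℝ, 0 < ε → ∃ i₀ : ℕ, 1 ≤ i₀ ∧ ∀ i, i₀ ≤ i → ∀ N, i ≤ N →
      ∀ x : EuclideanSpace ℝ (Fin d),
        ⟪(γ i • ∑ j ∈ Finset.Icc i N,
              prodIcc (fun k => (1 : EuclideanSpace ℝ (Fin d) →L[ℝ] EuclideanSpace ℝ (Fin d))
                - γ k • A) (i + 1) j) x, x⟫
          ≤ (1 + ε) * ⟪Ainv x, x⟫ := by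
  intro ε hε
  rcases Nat.eq_zero_or_pos d with hd0 | hdpos
  · subst hd0
    refine ⟨1, le_rfl, fun i hi N hN x => ?_⟩
    have hx : x = 0 := Subsingleton.elim x 0
    rw [hx]
    simp
  -- regular variation consequences
  have hγ1pos : 0 < γ 1 := hγpos 1 le_rfl
  have hRV2 : Tendsto (fun i : ℕ => γ (2*i) / γ i) atTop (𝓝 ((2:ℝ) ^ (-ρ))) := by
    have h := hγRV 2 (by norm_num)
    apply h.congr
    intro i
    congr 2
    rw [show (2:ℝ) * (i:ℝ) = ((2*i : ℕ) : ℝ) by push_cast; ring, Nat.floor_natCast]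
  have hhalf : (1:ℝ)/2 < (2:ℝ) ^ (-ρ) := by
    have h1 : (2:ℝ) ^ (-(1:ℝ)) < (2:ℝ) ^ (-ρ) :=
      (Real.rpow_lt_rpow_left_iff one_lt_two).mpr (by linarith)
    rw [Real.rpow_neg_one] at h1
    norm_num at h1 ⊢
    linarith
  have hIat : Tendsto (fun i : ℕ => (i : ℝ) * γ i) atTop atTop :=
    gamma_mul_atTop γ hγpos hγmono _ hhalf hRV2
  have hδ0 : Tendsto (fun i : ℕ => (γ (i+1))⁻¹ - (γ i)⁻¹) atTop (𝓝 0) :=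
    delta_tendsto γ hγpos hγmono hγconcave hIat
  -- spectral decomposition
  haveI : Nonempty (Fin d) := ⟨⟨0, hdpos⟩⟩
  have hT : (A : EuclideanSpace ℝ (Fin d) →ₗ[ℝ] EuclideanSpace ℝ (Fin d)).IsSymmetric :=
    ContinuousLinearMap.isSelfAdjoint_iff_isSymmetric.mp hAsym
  have hrank : Module.finrank ℝ (EuclideanSpace ℝ (Fin d)) = d := finrank_euclideanSpace_fin
  set b : OrthonormalBasis (Fin d) ℝ (EuclideanSpace ℝ (Fin d)) :=
    hT.eigenvectorBasis hrank with hbdef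
  set μ : Fin d → ℝ := hT.eigenvalues hrank with hμdef
  have hAb : ∀ n, A (b n) = μ n • b n := by
    intro n
    have h := hT.apply_eigenvectorBasis hrank n
    exact h
  have hbnorm : ∀ n, ‖b n‖ = 1 := fun n => b.orthonormal.1 n
  have hbne : ∀ n, b n ≠ 0 := by
    intro n h
    have := hbnorm n
    rw [h, norm_zero] at this
    norm_num at this
  have hμpos : ∀ n, 0 < μ n := by
    intro n
    have h := hApos (b n) (hbne n)
    rw [hAb n, real_inner_smul_left] at h
    have hin : ⟪b n, b n⟫ = 1 := by
      rw [real_inner_self_eq_norm_sq, hbnorm]; norm_num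
    rw [hin] at h
    simpa using h
  have hμ1 : ∀ n, γ 1 * μ n < 1 := fun n => heig (μ n) (b n) (hbne n) (hAb n)
  have hAinvb : ∀ n, Ainv (b n) = (μ n)⁻¹ • b n := by
    intro n
    have h0 : Ainv (A (b n)) = b n := by
      have := ContinuousLinearMap.ext_iff.mp hAinv₂ (b n)
      simpa using this
    rw [hAb n, map_smul] at h0
    rw [eq_inv_smul_iff₀ (hμpos n).ne']
    exact h0
  -- minimum eigenvalue
  set σmin : ℝ := Finset.univ.inf' Finset.univ_nonempty μ with hσdef
  have hσminpos : 0 < σmin := by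
    rw [hσdef, Finset.lt_inf'_iff]
    exact fun n _ => hμpos n
  have hσminle : ∀ n, σmin ≤ μ n := fun n => Finset.inf'_le _ (Finset.mem_univ n)
  -- choice of i₀
  set c : ℝ := min (ε * σmin / (2*(1+ε))) (ε / (2 * γ 1)) with hcdef
  have hcpos : 0 < c := by
    apply lt_min
    · positivity
    · positivity
  obtain ⟨i₀', hi₀'⟩ := eventually_atTop.mp (hδ0.eventually_lt_const hcpos)
  refine ⟨max i₀' 1, le_max_right _ _, fun i hi N hN x => ?_⟩
  have hi1 : 1 ≤ i := le_trans (le_max_right _ _) hi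
  have hδc : (γ (i+1))⁻¹ - (γ i)⁻¹ < c := hi₀' i (le_trans (le_max_left _ _) hi)
  have hδnn : 0 ≤ (γ (i+1))⁻¹ - (γ i)⁻¹ := by
    have h1 : (γ i)⁻¹ ≤ (γ (i+1))⁻¹ :=
      inv_anti₀ (hγpos (i+1) (le_trans hi1 (Nat.le_succ i)))
        (hγmono i (i+1) hi1 (Nat.le_succ i))
    linarith
  have hγiγ1 : γ i ≤ γ 1 := hγmono 1 i le_rfl hi1
  have hγipos : 0 < γ i := hγpos i hi1
  -- per-eigenvalue scalar bound
  have hc1 : c ≤ ε * σmin / (2*(1+ε)) := min_le_left _ _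
  have hc2 : c ≤ ε / (2 * γ 1) := min_le_right _ _
  have hv : γ i * ((γ (i+1))⁻¹ - (γ i)⁻¹) ≤ ε/2 := by
    calc γ i * ((γ (i+1))⁻¹ - (γ i)⁻¹) ≤ γ 1 * ((γ (i+1))⁻¹ - (γ i)⁻¹) :=
          mul_le_mul_of_nonneg_right hγiγ1 hδnn
      _ ≤ γ 1 * (ε / (2 * γ 1)) :=
          mul_le_mul_of_nonneg_left (le_trans hδc.le hc2) hγ1pos.le
      _ = ε/2 := by field_simp
  have hu : (1+ε) * ((γ (i+1))⁻¹ - (γ i)⁻¹) ≤ ε * σmin / 2 := by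
    have h1 : (1+ε) * ((γ (i+1))⁻¹ - (γ i)⁻¹) ≤ (1+ε) * (ε * σmin / (2*(1+ε))) :=
      mul_le_mul_of_nonneg_left (le_trans hδc.le hc1) (by linarith)
    have h2 : (1+ε) * (ε * σmin / (2*(1+ε))) = ε * σmin / 2 := by
      field_simp
    linarith
  have hsc : ∀ n, γ i * ∑ j ∈ Finset.Icc i N, ∏ k ∈ Finset.Icc (i+1) j, (1 - γ k * μ n)
      ≤ (1+ε) / μ n := by
    intro n
    apply scalar_bound γ hγpos hγmono hγconcave (μ n) (hμpos n) (hμ1 n) ε hε i hi1 ?_ ?_ N hN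
    · -- δ i < μ n
      have h3 : ε * σmin / (2*(1+ε)) < σmin := by
        rw [div_lt_iff₀ (by linarith)]
        nlinarith
      linarith [hσminle n]
    · -- the ε-condition
      have h4 := mul_le_mul_of_nonneg_left hv (hμpos n).le
      have h5 := mul_le_mul_of_nonneg_left (hσminle n) hε.le
      nlinarith
  -- matrix computation
  have hGb : ∀ n, (γ i • ∑ j ∈ Finset.Icc i N,
        prodIcc (fun k => (1 : EuclideanSpace ℝ (Fin d) →L[ℝ] EuclideanSpace ℝ (Fin d))
          - γ k • A) (i + 1) j) (b n)
      = (γ i * ∑ j ∈ Finset.Icc i N, ∏ k ∈ Finset.Icc (i+1) j, (1 - γ k * μ n)) • b n := by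
    intro n
    rw [ContinuousLinearMap.smul_apply, ContinuousLinearMap.sum_apply]
    have hterm : ∀ j ∈ Finset.Icc i N,
        (prodIcc (fun k => (1 : EuclideanSpace ℝ (Fin d) →L[ℝ] EuclideanSpace ℝ (Fin d))
          - γ k • A) (i + 1) j) (b n)
        = (∏ k ∈ Finset.Icc (i+1) j, (1 - γ k * μ n)) • b n :=
      fun j _ => prodIcc_apply_eigen γ A (b n) (μ n) (hAb n) (i+1) j
    rw [Finset.sum_congr rfl hterm, ← Finset.sum_smul, smul_smul]
  rw [inner_eig_sum b _ _ hGb x, inner_eig_sum b Ainv (fun n => (μ n)⁻¹) hAinvb x,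
    Finset.mul_sum]
  apply Finset.sum_le_sum
  intro n _
  have hsq : (0:ℝ) ≤ (b.repr x n)^2 := sq_nonneg _
  have h6 := mul_le_mul_of_nonneg_right (hsc n) hsq
  calc (γ i * ∑ j ∈ Finset.Icc i N, ∏ k ∈ Finset.Icc (i+1) j, (1 - γ k * μ n))
        * (b.repr x n)^2
      ≤ ((1+ε) / μ n) * (b.repr x n)^2 := h6
    _ = (1+ε) * ((μ n)⁻¹ * (b.repr x n)^2) := by
        rw [div_eq_mul_inv]; ring
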